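/- Let a ∈ C²(ℝ) with a(s) ≥ ν > 0 for all s ∈ ℝ, let k > 0 and a₁ > 0, assume lim_{s→+∞} a(s)/s^k = a₁, and let g be the solution of g'(s) = 1/√(a(g(s))), g(0) = 0. Then lim_{s→+∞} s g'(s)/g(s) = 2/(k+2). -/

import Mathlib

open Filter Real Topology MeasureTheory intervalIntegral

theorem s_gprime_over_g_limit
    (a : ℝ → ℝ) (ν : ℝ) (hν : 0 < ν)
    (ha : ContDiff ℝ 2 a) (hbound : ∀ s, ν ≤ a s)
    (k a₁ : ℝ) (hk : 0 < k) (ha₁ : 0 < a₁)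
    (hlim : Tendsto (fun s : ℝ => a s / s ^ k) atTop (𝓝 a₁))
    (g : ℝ → ℝ)
    (hg : ∀ s, HasDerivAt g (1 / Real.sqrt (a (g s))) s) (hg0 : g 0 = 0) :
    Tendsto (fun s : ℝ => s * deriv g s / g s) atTop (𝓝 (2 / (k + 2))) := by
  have hapos : ∀ y, 0 < a y := fun y => lt_of_lt_of_le hν (hbound y)
  have hsq : ∀ y, 0 < Real.sqrt (a y) := fun y => Real.sqrt_pos.2 (hapos y)
  set c : ℝ := k / 2 + 1 with hc_def
  have hc : (0:ℝ) < c := by positivity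
  have hcont : Continuous fun t => Real.sqrt (a t) := ha.continuous.sqrt
  set F : ℝ → ℝ := fun y => ∫ t in (0:ℝ)..y, Real.sqrt (a t) with hF_def
  have hFderiv : ∀ y, HasDerivAt F (Real.sqrt (a y)) y := fun y =>
    integral_hasDerivAt_right (hcont.intervalIntegrable 0 y)
      hcont.aestronglyMeasurable.stronglyMeasurableAtFilter hcont.continuousAt
  -- Step A : F (g s) = s
  have hsg : ∀ s, F (g s) = s := by
    have hder : ∀ s, HasDerivAt (fun s => F (g s) - s) 0 s := by
      intro s
      have h1 : HasDerivAt (fun s => F (g s))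
          (Real.sqrt (a (g s)) * (1 / Real.sqrt (a (g s)))) s :=
        (hFderiv (g s)).comp s (hg s)
      have h2 : Real.sqrt (a (g s)) * (1 / Real.sqrt (a (g s))) = 1 := by
        rw [mul_one_div, div_self (hsq (g s)).ne']
      rw [h2] at h1
      have h3 : HasDerivAt (fun s => F (g s) - s) (1 - 1) s := h1.sub (hasDerivAt_id s)
      rwa [sub_self] at h3
    have hconst : ∀ s, F (g s) - s = F (g 0) - 0 := by
      intro s
      exact is_const_of_deriv_eq_zero (fun x => (hder x).differentiableAt)
        (fun x => (hder x).deriv) s 0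
    intro s
    have := hconst s
    rw [hg0] at this
    have hF0 : F (0:ℝ) = 0 := by simp [hF_def]
    rw [hF0] at this
    linarith
  -- F is strictly monotone
  have hFmono : StrictMono F := by
    apply strictMono_of_deriv_pos
    intro y
    rw [(hFderiv y).deriv]
    exact hsq y
  -- Step B : g → ∞
  have hB : Tendsto g atTop atTop := by
    rw [tendsto_atTop_atTop]
    intro b
    refine ⟨F b + 1, fun s hs => ?_⟩
    by_contra h
    push_neg at h
    have : F (g s) < F b := hFmono h
    rw [hsg s] at this
    linarith
  -- C1 : sqrt(a y) / y^(k/2) → sqrt a₁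
  set L : ℝ := Real.sqrt a₁ with hL_def
  have hL : 0 < L := Real.sqrt_pos.2 ha₁
  have hC1 : Tendsto (fun y : ℝ => Real.sqrt (a y) / y ^ (k/2)) atTop (𝓝 L) := by
    have h1 : Tendsto (fun y : ℝ => Real.sqrt (a y / y ^ k)) atTop (𝓝 L) :=
      (Real.continuous_sqrt.continuousAt.tendsto).comp hlim
    refine h1.congr' ?_
    filter_upwards [eventually_gt_atTop (0:ℝ)] with y hy
    rw [Real.sqrt_div (le_of_lt (hapos y)), Real.sqrt_eq_rpow (y ^ k),
      ← Real.rpow_mul hy.le, mul_one_div]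
  -- C2 : F y / y^c → L / c
  have hC2 : Tendsto (fun y : ℝ => F y / y ^ c) atTop (𝓝 (L / c)) := by
    rw [Metric.tendsto_nhds]
    intro ε hε
    set ε' : ℝ := min (ε * c / 2) (L / 2) with hε'_def
    have hε' : 0 < ε' := lt_min (by positivity) (by positivity)
    have hε'c : ε' / c ≤ ε / 2 := by
      rw [div_le_iff₀ hc]
      calc ε' ≤ ε * c / 2 := min_le_left _ _
        _ = ε / 2 * c := by ring
    have h1 : ∀ᶠ y in atTop, |Real.sqrt (a y) / y ^ (k/2) - L| < ε' := by
      have := Metric.tendsto_nhds.mp hC1 ε' hε'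
      simpa [Real.dist_eq] using this
    obtain ⟨Y, hY⟩ := (h1.and (eventually_ge_atTop (1:ℝ))).exists_forall_of_atTop
    have hY1 : (1:ℝ) ≤ Y := (hY Y le_rfl).2
    have hYpos : (0:ℝ) < Y := lt_of_lt_of_le one_pos hY1
    -- pointwise bounds on the integrand
    have hbnd : ∀ t, Y ≤ t →
        (L - ε') * t ^ (k/2) ≤ Real.sqrt (a t) ∧
        Real.sqrt (a t) ≤ (L + ε') * t ^ (k/2) := by
      intro t ht
      have htpos : (0:ℝ) < t := lt_of_lt_of_le hYpos ht
      have htp : (0:ℝ) < t ^ (k/2) := Real.rpow_pos_of_pos htpos _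
      have h := (hY t ht).1
      rw [abs_lt] at h
      constructor
      · have : L - ε' < Real.sqrt (a t) / t ^ (k/2) := by linarith
        calc (L - ε') * t ^ (k/2) ≤ (Real.sqrt (a t) / t ^ (k/2)) * t ^ (k/2) := by
              apply mul_le_mul_of_nonneg_right this.le htp.le
          _ = Real.sqrt (a t) := by field_simp
      · have : Real.sqrt (a t) / t ^ (k/2) < L + ε' := by linarith
        calc Real.sqrt (a t) = (Real.sqrt (a t) / t ^ (k/2)) * t ^ (k/2) := by field_simp
          _ ≤ (L + ε') * t ^ (k/2) := mul_le_mul_of_nonneg_right this.le htp.le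
    have hrpow_cont : Continuous fun t : ℝ => t ^ (k/2) :=
      Real.continuous_rpow_const (by positivity)
    -- the integral bounds
    have hFbound : ∀ y, Y ≤ y →
        F Y + (L - ε') * ((y ^ c - Y ^ c) / c) ≤ F y ∧
        F y ≤ F Y + (L + ε') * ((y ^ c - Y ^ c) / c) := by
      intro y hy
      have hsplit : F Y + ∫ t in Y..y, Real.sqrt (a t) = F y :=
        integral_add_adjacent_intervals (hcont.intervalIntegrable 0 Y)
          (hcont.intervalIntegrable Y y)
      have hrint : ∫ t in Y..y, t ^ (k/2) = (y ^ c - Y ^ c) / c := by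
        rw [integral_rpow (Or.inl (by linarith : (-1:ℝ) < k/2))]
      have hupper : (∫ t in Y..y, Real.sqrt (a t)) ≤ ∫ t in Y..y, (L + ε') * t ^ (k/2) := by
        apply integral_mono_on hy (hcont.intervalIntegrable Y y)
          ((hrpow_cont.const_smul (L + ε')).intervalIntegrable Y y)
        intro t ht
        exact (hbnd t ht.1).2
      have hlower : (∫ t in Y..y, (L - ε') * t ^ (k/2)) ≤ ∫ t in Y..y, Real.sqrt (a t) := by
        apply integral_mono_on hy
          ((hrpow_cont.const_smul (L - ε')).intervalIntegrable Y y)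
          (hcont.intervalIntegrable Y y)
        intro t ht
        exact (hbnd t ht.1).1
      rw [intervalIntegral.integral_const_mul, hrint] at hupper hlower
      constructor <;> linarith
    -- tendsto of the bounding functions
    have haux : ∀ B : ℝ, Tendsto
        (fun y : ℝ => (F Y + B * ((y ^ c - Y ^ c) / c)) / y ^ c) atTop (𝓝 (B / c)) := by
      intro B
      have h0 : Tendsto (fun y : ℝ => (F Y - B * Y ^ c / c) / y ^ c + B / c)
          atTop (𝓝 (0 + B / c)) :=
        (Tendsto.div_atTop tendsto_const_nhds (tendsto_rpow_atTop hc)).add tendsto_const_nhds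
      rw [zero_add] at h0
      refine h0.congr' ?_
      filter_upwards [eventually_gt_atTop (0:ℝ)] with y hy
      have hyc : y ^ c ≠ 0 := (Real.rpow_pos_of_pos hy _).ne'
      field_simp
      ring
    have hlow : ∀ᶠ y in atTop,
        L / c - ε < (F Y + (L - ε') * ((y ^ c - Y ^ c) / c)) / y ^ c := by
      apply (haux (L - ε')).eventually_const_lt
      have : (L - ε') / c = L / c - ε' / c := by ring
      rw [this]
      have : ε' / c < ε := lt_of_le_of_lt hε'c (by linarith)
      linarith
    have hup : ∀ᶠ y in atTop,
        (F Y + (L + ε') * ((y ^ c - Y ^ c) / c)) / y ^ c < L / c + ε := by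
      apply (haux (L + ε')).eventually_lt_const
      have : (L + ε') / c = L / c + ε' / c := by ring
      rw [this]
      have : ε' / c < ε := lt_of_le_of_lt hε'c (by linarith)
      linarith
    filter_upwards [hlow, hup, eventually_ge_atTop Y, eventually_gt_atTop (0:ℝ)]
      with y h₁ h₂ hy hy0
    have hyc : (0:ℝ) < y ^ c := Real.rpow_pos_of_pos hy0 _
    obtain ⟨hA, hBd⟩ := hFbound y hy
    have e1 : (F Y + (L - ε') * ((y ^ c - Y ^ c) / c)) / y ^ c ≤ F y / y ^ c := by gcongr
    have e2 : F y / y ^ c ≤ (F Y + (L + ε') * ((y ^ c - Y ^ c) / c)) / y ^ c := by gcongr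
    rw [Real.dist_eq, abs_lt]
    constructor <;> linarith
  -- C : F y / (y * sqrt (a y)) → 2 / (k+2)
  have hC : Tendsto (fun y : ℝ => F y / (y * Real.sqrt (a y))) atTop (𝓝 (2 / (k + 2))) := by
    have hdiv : Tendsto (fun y : ℝ => (F y / y ^ c) / (Real.sqrt (a y) / y ^ (k/2)))
        atTop (𝓝 ((L / c) / L)) := hC2.div hC1 hL.ne'
    have hval : (L / c) / L = 2 / (k + 2) := by
      rw [hc_def]
      field_simp
    rw [hval] at hdiv
    refine hdiv.congr' ?_
    filter_upwards [eventually_gt_atTop (0:ℝ)] with y hy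
    have hyk : (0:ℝ) < y ^ (k/2) := Real.rpow_pos_of_pos hy _
    have hyc : y ^ c = y ^ (k/2) * y := by
      rw [hc_def, Real.rpow_add hy, Real.rpow_one]
    have h1 : Real.sqrt (a y) ≠ 0 := (hsq y).ne'
    have h2 : y ≠ 0 := hy.ne'
    have h3 : y ^ (k/2) ≠ 0 := hyk.ne'
    rw [hyc]
    field_simp
  -- conclude
  have hcomp : Tendsto (fun s => F (g s) / (g s * Real.sqrt (a (g s)))) atTop
      (𝓝 (2 / (k + 2))) := hC.comp hB
  refine hcomp.congr (fun s => ?_)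
  rw [(hg s).deriv, hsg s]
  rw [mul_one_div, div_div, mul_comm (Real.sqrt (a (g s))) (g s)]
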